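/- Detailed balance for the chain of Chinese restaurants (Lemma 4.1, case of distinct sites): with the Ewens weights, the rate function t, the transition λ ↦ λ' and the rates q, q' described below, one has W(λ)·q = W(λ')·q' for every admissible move; hence P_{L,n} satisfies detailed balance for these rates. -/

import Mathlib

open scoped BigOperators ENNReal NNReal
open Filter MeasureTheory

namespace Spart

/-- `exp(-t)` for an extended-real `t`, with `exp(-∞) = 0`. -/
noncomputable def expNeg (t : ℝ≥0∞) : ℝ := if t = ∞ then 0 else Real.exp (-t.toReal)

/-- Sites of the lattice `ℤ^d`. -/
abbrev Site (d : ℕ) := Fin d → ℤ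

/-- A spatial partition: a finitely supported family `(r_{x,j})` of natural numbers.
(Only indices `j ≥ 1` are meaningful; configurations are supported on `j ≥ 1`.) -/
abbrev Config (d : ℕ) := (Site d × ℕ) →₀ ℕ

/-- The rescaled site `x/L ∈ ℝ^d`. -/
noncomputable def scaledSite {d : ℕ} (x : Site d) (L : ℝ) : Fin d → ℝ :=
  fun i => (x i : ℝ) / L

/-- Site occupation number `η_x(r) = Σ_j j r_{x,j}`. -/
noncomputable def siteOcc {d : ℕ} (r : Config d) (x : Site d) : ℕ :=
  ∑ p ∈ r.support, if p.1 = x then p.2 * r p else 0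

/-- Component counts `r_j(r) = Σ_x r_{x,j}`. -/
noncomputable def compCount {d : ℕ} (r : Config d) (j : ℕ) : ℕ :=
  ∑ p ∈ r.support, if p.2 = j then r p else 0

/-- Total mass `Σ_{x,j} j r_{x,j}`. -/
noncomputable def mass {d : ℕ} (r : Config d) : ℕ :=
  ∑ p ∈ r.support, p.2 * r p

/-- The (unnormalized) weight of a spatial partition. -/
noncomputable def W {d : ℕ} (V : (Fin d → ℝ) → ℝ≥0∞) (θ : ℕ → ℝ) (L : ℝ) (r : Config d) : ℝ :=
  ∏ p ∈ r.support,
    (1 / (Nat.factorial (r p)) : ℝ) *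
      ((θ p.2 / (p.2 : ℝ)) * expNeg ((p.2 : ℝ≥0∞) * V (scaledSite p.1 L))) ^ (r p)

/-- The canonical partition function `Z_{L,n}`. -/
noncomputable def Z {d : ℕ} (V : (Fin d → ℝ) → ℝ≥0∞) (θ : ℕ → ℝ) (L : ℝ) (n : ℕ) : ℝ :=
  ∑' r : {r : Config d // mass r = n}, W V θ L (r : Config d)

/-- The probability of an event under the canonical measure `P_{L,n}`. -/
noncomputable def P {d : ℕ} (V : (Fin d → ℝ) → ℝ≥0∞) (θ : ℕ → ℝ) (L : ℝ) (n : ℕ)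
    (E : Set (Config d)) : ℝ :=
  (∑' r : {r : Config d // mass r = n ∧ r ∈ E}, W V θ L (r : Config d)) / Z V θ L n

/-- Expectation of an observable under the canonical measure `P_{L,n}`. -/
noncomputable def Ex {d : ℕ} (V : (Fin d → ℝ) → ℝ≥0∞) (θ : ℕ → ℝ) (L : ℝ) (n : ℕ)
    (f : Config d → ℝ) : ℝ :=
  (∑' r : {r : Config d // mass r = n}, f (r : Config d) * W V θ L (r : Config d)) / Z V θ L n

/-- Single-site normalization `h_m = Σ_{λ ⊢ m} ∏_j (1/ρ_j(λ)!) (θ_j/j)^{ρ_j(λ)}`. -/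
noncomputable def hcoef (θ : ℕ → ℝ) (m : ℕ) : ℝ :=
  ∑ lam : Nat.Partition m, ∏ j ∈ lam.parts.toFinset,
    (1 / (Nat.factorial (Multiset.count j lam.parts)) : ℝ) *
      (θ j / (j : ℝ)) ^ (Multiset.count j lam.parts)

end Spart

namespace Spart

/-- The zero-range exit rate in the Ewens case: `g(m) = m/(θ+m-1)`, `g(0)=0`. -/
noncomputable def gEwens (θ : ℝ) (m : ℕ) : ℝ :=
  if m = 0 then 0 else (m : ℝ) / (θ + (m : ℝ) - 1)

/-- Transition rate of the chain of Chinese restaurants: a customer leaves a `j`-table at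
restaurant `x` (rate `g(η_x) p₋(j)`), moves to restaurant `y` (probability `t x y`) and joins a
`k`-table there (`k = 0` meaning he opens a new table). -/
noncomputable def ccrRate {d : ℕ} (θ : ℝ) (t : Site d → Site d → ℝ) (lam : Config d)
    (x y : Site d) (j k : ℕ) : ℝ :=
  gEwens θ (siteOcc lam x) * t x y *
    (((j : ℝ) * (lam (x, j) : ℝ)) / (siteOcc lam x : ℝ)) *
    (if 1 ≤ k then ((k : ℝ) * (lam (y, k) : ℝ)) / ((siteOcc lam y : ℝ) + θ)
     else θ / ((siteOcc lam y : ℝ) + θ))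

lemma expNeg_natCast_mul (m : ℕ) (v : ℝ≥0∞) : expNeg ((m:ℝ≥0∞) * v) = (expNeg v)^m := by
  rcases Nat.eq_zero_or_pos m with hm | hm
  · simp [hm, expNeg]
  rcases eq_or_ne v ∞ with hv | hv
  · have hmv : (m:ℝ≥0∞) * v = ∞ := by
      rw [hv]; exact ENNReal.mul_top (by exact_mod_cast hm.ne')
    simp [expNeg, hmv, hv, zero_pow hm.ne',
      ENNReal.mul_top (show (m:ℝ≥0∞) ≠ 0 by exact_mod_cast hm.ne')]
  · have hmv : (m:ℝ≥0∞) * v ≠ ∞ := ENNReal.mul_ne_top (ENNReal.natCast_ne_top m) hv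
    simp only [expNeg, if_neg hmv, if_neg hv]
    rw [ENNReal.toReal_mul, ENNReal.toReal_natCast, ← Real.exp_nat_mul]
    ring_nf

noncomputable def Fterm {d : ℕ} (V : (Fin d → ℝ) → ℝ≥0∞) (θ L : ℝ) (p : Site d × ℕ) (c : ℕ) : ℝ :=
  (1 / (Nat.factorial c) : ℝ) *
    ((θ / (p.2 : ℝ)) * expNeg ((p.2 : ℝ≥0∞) * V (scaledSite p.1 L))) ^ c

lemma Fterm_eval {d : ℕ} (V : (Fin d → ℝ) → ℝ≥0∞) (θ L : ℝ) (s : Site d) (m c : ℕ) :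
    Fterm V θ L (s, m) c
      = (1 / (Nat.factorial c) : ℝ) * ((θ / (m : ℝ)) * (expNeg (V (scaledSite s L)))^m) ^ c := by
  simp [Fterm, expNeg_natCast_mul]

lemma fact_step (u : ℝ) (c : ℕ) :
    (1 / (Nat.factorial (c+1)) : ℝ) * u^(c+1) * ((c:ℝ)+1)
      = (1 / (Nat.factorial c) : ℝ) * u^c * u := by
  have hc : (c:ℝ)+1 ≠ 0 := by positivity
  have hf : ((Nat.factorial c : ℕ) : ℝ) ≠ 0 := Nat.cast_ne_zero.2 (Nat.factorial_ne_zero c)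
  rw [Nat.factorial_succ]
  push_cast
  field_simp
  ring

lemma Fterm_step {d : ℕ} (V : (Fin d → ℝ) → ℝ≥0∞) (θ L : ℝ) (s : Site d) (m c : ℕ) :
    Fterm V θ L (s, m) (c+1) * ((c:ℝ)+1)
      = Fterm V θ L (s, m) c * ((θ / (m : ℝ)) * (expNeg (V (scaledSite s L)))^m) := by
  rw [Fterm_eval, Fterm_eval]; exact fact_step _ c

lemma W_eq_prod {d : ℕ} (V : (Fin d → ℝ) → ℝ≥0∞) (θ L : ℝ) (r : Config d)
    (S : Finset (Site d × ℕ)) (h : r.support ⊆ S) :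
    W V (fun _ => θ) L r = ∏ p ∈ S, Fterm V θ L p (r p) := by
  rw [W]
  refine Finset.prod_subset h ?_
  intro p _ hp
  simp [Fterm, Finsupp.notMem_support_iff.1 hp]

lemma siteOcc_eq_sum {d : ℕ} (r : Config d) (s : Site d)
    (S : Finset (Site d × ℕ)) (h : r.support ⊆ S) :
    siteOcc r s = ∑ p ∈ S, if p.1 = s then p.2 * r p else 0 := by
  rw [siteOcc]
  refine Finset.sum_subset h ?_
  intro p _ hp
  simp [Finsupp.notMem_support_iff.1 hp]


lemma ccrRate_eq {d : ℕ} (θ : ℝ) (hθ : 0 < θ) (t : Site d → Site d → ℝ) (mu : Config d)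
    (x y : Site d) (j k : ℕ) (h0 : 1 ≤ siteOcc mu x) :
    ccrRate θ t mu x y j k
      = ((j:ℝ) * ((mu (x,j) : ℕ):ℝ)
            * (if 1 ≤ k then (k:ℝ) * ((mu (y,k) : ℕ):ℝ) else θ) * t x y)
        / ((θ + ((siteOcc mu x : ℕ):ℝ) - 1) * (((siteOcc mu y : ℕ):ℝ) + θ)) := by
  have hne : siteOcc mu x ≠ 0 := by omega
  have hxR : ((siteOcc mu x : ℕ):ℝ) ≠ 0 := Nat.cast_ne_zero.2 hne
  have hDx : (0:ℝ) < θ + ((siteOcc mu x : ℕ):ℝ) - 1 := by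
    have h1' : (1:ℝ) ≤ ((siteOcc mu x : ℕ):ℝ) := by exact_mod_cast h0
    linarith
  have hDy : (0:ℝ) < ((siteOcc mu y : ℕ):ℝ) + θ := by positivity
  rw [ccrRate, gEwens, if_neg hne]
  split_ifs with hk
  · field_simp
  · field_simp

lemma P_singleton {d : ℕ} (V : (Fin d → ℝ) → ℝ≥0∞) (θ : ℕ → ℝ) (L : ℝ) (n : ℕ)
    (mu : Config d) (hmu : mass mu = n) :
    P V θ L n {mu} = W V θ L mu / Z V θ L n := by
  rw [P]
  congr 1
  exact tsum_eq_single
    (⟨mu, hmu, rfl⟩ : {r : Config d // mass r = n ∧ r ∈ ({mu} : Set (Config d))})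
    (fun b hb => absurd (Subtype.ext (Set.mem_singleton_iff.mp b.2.2)) hb)

/-- Lemma 4.1, case of distinct sites: detailed balance for the chain of
Chinese restaurants with Ewens weights. The reverse move takes a customer from a `(k+1)`-table
at `y` to a `(j-1)`-table at `x` (`j = 1` meaning he opens a new table). -/
theorem statement6 (d : ℕ) (hd : 1 ≤ d)
    (V : (Fin d → ℝ) → ℝ≥0∞) (θ : ℝ) (hθ : 0 < θ) (L : ℝ) (hL : 0 < L) (n : ℕ)
    (hZsum : Summable (fun r : {r : Config d // mass r = n} => W V (fun _ => θ) L (r : Config d)))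
    (hZpos : 0 < Z V (fun _ => θ) L n)
    (t : Site d → Site d → ℝ) (ht0 : ∀ x y, 0 ≤ t x y)
    (ht1 : ∀ x, HasSum (fun y => t x y) 1)
    (htbal : ∀ x y, expNeg (V (scaledSite x L)) * t x y = expNeg (V (scaledSite y L)) * t y x)
    (lam lam' : Config d) (hmass : mass lam = n) (hmass' : mass lam' = n)
    (x y : Site d) (hxy : x ≠ y) (j k : ℕ) (hj : 1 ≤ j)
    (hz : ∀ s : Site d, lam (s, 0) = 0) (hz' : ∀ s : Site d, lam' (s, 0) = 0)
    (h1 : lam (x, j) = lam' (x, j) + 1)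
    (h2 : 2 ≤ j → lam' (x, j - 1) = lam (x, j - 1) + 1)
    (h3 : 1 ≤ k → lam (y, k) = lam' (y, k) + 1)
    (h4 : lam' (y, k + 1) = lam (y, k + 1) + 1)
    (h5 : ∀ p : Site d × ℕ, p ≠ (x, j) → p ≠ (x, j - 1) → p ≠ (y, k) → p ≠ (y, k + 1) →
      lam' p = lam p) :
    W V (fun _ => θ) L lam * ccrRate θ t lam x y j k
      = W V (fun _ => θ) L lam' * ccrRate θ t lam' y x (k + 1) (j - 1) ∧
    P V (fun _ => θ) L n {lam} * ccrRate θ t lam x y j k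
      = P V (fun _ => θ) L n {lam'} * ccrRate θ t lam' y x (k + 1) (j - 1) := by
  classical
  have hyx : y ≠ x := Ne.symm hxy
  have hd12 : ((x, j) : Site d × ℕ) ≠ (x, j-1) := by
    simp only [ne_eq, Prod.mk.injEq, not_and]
    intro _
    omega
  have hd13 : ((x, j) : Site d × ℕ) ≠ (y, k) := fun h => hxy (congrArg Prod.fst h)
  have hd14 : ((x, j) : Site d × ℕ) ≠ (y, k+1) := fun h => hxy (congrArg Prod.fst h)
  have hd23 : ((x, j-1) : Site d × ℕ) ≠ (y, k) := fun h => hxy (congrArg Prod.fst h)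
  have hd24 : ((x, j-1) : Site d × ℕ) ≠ (y, k+1) := fun h => hxy (congrArg Prod.fst h)
  have hd34 : ((y, k) : Site d × ℕ) ≠ (y, k+1) := by
    simp only [ne_eq, Prod.mk.injEq, not_and]
    intro _
    omega
  set T : Finset (Site d × ℕ) := {(x,j), (x,j-1), (y,k), (y,k+1)} with hTdef
  set S : Finset (Site d × ℕ) := (lam.support ∪ lam'.support) ∪ T with hSdef
  have hTS : T ⊆ S := Finset.subset_union_right
  have hSl : lam.support ⊆ S := Finset.Subset.trans Finset.subset_union_left Finset.subset_union_left
  have hSl' : lam'.support ⊆ S :=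
    Finset.Subset.trans Finset.subset_union_right Finset.subset_union_left
  have hnot1 : ((x,j) : Site d × ℕ) ∉ ({(x,j-1),(y,k),(y,k+1)} : Finset (Site d × ℕ)) := by
    simp only [Finset.mem_insert, Finset.mem_singleton]
    push_neg
    exact ⟨hd12, hd13, hd14⟩
  have hnot2 : ((x,j-1) : Site d × ℕ) ∉ ({(y,k),(y,k+1)} : Finset (Site d × ℕ)) := by
    simp only [Finset.mem_insert, Finset.mem_singleton]
    push_neg
    exact ⟨hd23, hd24⟩
  have hnot3 : ((y,k) : Site d × ℕ) ∉ ({(y,k+1)} : Finset (Site d × ℕ)) := by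
    simpa using hd34
  have hprodT : ∀ g : Site d × ℕ → ℝ,
      ∏ p ∈ T, g p = g (x,j) * g (x,j-1) * g (y,k) * g (y,k+1) := by
    intro g
    rw [hTdef]
    rw [Finset.prod_insert hnot1, Finset.prod_insert hnot2, Finset.prod_insert hnot3,
      Finset.prod_singleton]
    ring
  have hsumT : ∀ g : Site d × ℕ → ℕ,
      ∑ p ∈ T, g p = g (x,j) + g (x,j-1) + g (y,k) + g (y,k+1) := by
    intro g
    rw [hTdef]
    rw [Finset.sum_insert hnot1, Finset.sum_insert hnot2, Finset.sum_insert hnot3,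
      Finset.sum_singleton]
    ring
  have hnotT : ∀ p ∈ S \ T, lam' p = lam p := by
    intro p hp
    have hp' : p ∉ T := (Finset.mem_sdiff.1 hp).2
    rw [hTdef] at hp'
    simp only [Finset.mem_insert, Finset.mem_singleton] at hp'
    push_neg at hp'
    exact h5 p hp'.1 hp'.2.1 hp'.2.2.1 hp'.2.2.2
  -- site occupation decompositions
  have hSOx : siteOcc lam x = (∑ p ∈ S \ T, if p.1 = x then p.2 * lam p else 0)
      + (j * lam (x,j) + (j-1) * lam (x,j-1)) := by
    rw [siteOcc_eq_sum lam x S hSl, ← Finset.sum_sdiff hTS, hsumT]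
    simp [hyx]
  have hBx' : (∑ p ∈ S \ T, if p.1 = x then p.2 * lam' p else 0)
      = ∑ p ∈ S \ T, if p.1 = x then p.2 * lam p else 0 :=
    Finset.sum_congr rfl (fun p hp => by rw [hnotT p hp])
  have hSOx' : siteOcc lam' x = (∑ p ∈ S \ T, if p.1 = x then p.2 * lam p else 0)
      + (j * lam' (x,j) + (j-1) * lam' (x,j-1)) := by
    rw [siteOcc_eq_sum lam' x S hSl', ← Finset.sum_sdiff hTS, hsumT, hBx']
    simp [hyx]
  have hSOy : siteOcc lam y = (∑ p ∈ S \ T, if p.1 = y then p.2 * lam p else 0)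
      + (k * lam (y,k) + (k+1) * lam (y,k+1)) := by
    rw [siteOcc_eq_sum lam y S hSl, ← Finset.sum_sdiff hTS, hsumT]
    simp [hxy]
  have hBy' : (∑ p ∈ S \ T, if p.1 = y then p.2 * lam' p else 0)
      = ∑ p ∈ S \ T, if p.1 = y then p.2 * lam p else 0 :=
    Finset.sum_congr rfl (fun p hp => by rw [hnotT p hp])
  have hSOy' : siteOcc lam' y = (∑ p ∈ S \ T, if p.1 = y then p.2 * lam p else 0)
      + (k * lam' (y,k) + (k+1) * lam' (y,k+1)) := by
    rw [siteOcc_eq_sum lam' y S hSl', ← Finset.sum_sdiff hTS, hsumT, hBy']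
    simp [hxy]
  have e1 : j * lam (x,j) = j * lam' (x,j) + j := by rw [h1]; ring
  have e2 : (j-1) * lam' (x,j-1) = (j-1) * lam (x,j-1) + (j-1) := by
    rcases Nat.lt_or_ge j 2 with hj2 | hj2
    · have hj1 : j - 1 = 0 := by omega
      simp [hj1]
    · rw [h2 hj2]; ring
  have e3 : k * lam (y,k) = k * lam' (y,k) + k := by
    rcases Nat.eq_zero_or_pos k with hk | hk
    · simp [hk]
    · rw [h3 hk]; ring
  have e4 : (k+1) * lam' (y,k+1) = (k+1) * lam (y,k+1) + (k+1) := by rw [h4]; ring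
  have hN1 : siteOcc lam x = siteOcc lam' x + 1 := by
    rw [hSOx, hSOx', e1, e2]
    generalize (∑ p ∈ S \ T, if p.1 = x then p.2 * lam p else 0) = B
    generalize j * lam' (x,j) = A
    generalize (j-1) * lam (x,j-1) = C
    omega
  have hN2 : siteOcc lam' y = siteOcc lam y + 1 := by
    rw [hSOy, hSOy', e3, e4]
    generalize (∑ p ∈ S \ T, if p.1 = y then p.2 * lam p else 0) = B
    generalize k * lam' (y,k) = A
    generalize (k+1) * lam (y,k+1) = C
    omega
  have hN3 : 1 ≤ siteOcc lam x := by
    have hone : 1 ≤ j * lam (x,j) :=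
      Nat.one_le_iff_ne_zero.2 (Nat.mul_ne_zero (by omega) (by omega))
    rw [hSOx]
    generalize (∑ p ∈ S \ T, if p.1 = x then p.2 * lam p else 0) = B
    generalize j * lam (x,j) = A at hone ⊢
    generalize (j-1) * lam (x,j-1) = C
    omega
  have hN4 : 1 ≤ siteOcc lam' y := by
    have hone : 1 ≤ (k+1) * lam' (y,k+1) :=
      Nat.one_le_iff_ne_zero.2 (Nat.mul_ne_zero (by omega) (by omega))
    rw [hSOy']
    generalize (∑ p ∈ S \ T, if p.1 = y then p.2 * lam p else 0) = B
    generalize k * lam' (y,k) = A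
    generalize (k+1) * lam' (y,k+1) = C at hone ⊢
    omega
  -- weight decompositions
  have hWl : W V (fun _ => θ) L lam
      = (∏ p ∈ S \ T, Fterm V θ L p (lam p))
        * (Fterm V θ L (x,j) (lam (x,j)) * Fterm V θ L (x,j-1) (lam (x,j-1))
          * Fterm V θ L (y,k) (lam (y,k)) * Fterm V θ L (y,k+1) (lam (y,k+1))) := by
    rw [W_eq_prod V θ L lam S hSl, ← Finset.prod_sdiff hTS, hprodT]
  have hRR : (∏ p ∈ S \ T, Fterm V θ L p (lam' p)) = ∏ p ∈ S \ T, Fterm V θ L p (lam p) :=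
    Finset.prod_congr rfl (fun p hp => by rw [hnotT p hp])
  have hWl' : W V (fun _ => θ) L lam'
      = (∏ p ∈ S \ T, Fterm V θ L p (lam p))
        * (Fterm V θ L (x,j) (lam' (x,j)) * Fterm V θ L (x,j-1) (lam' (x,j-1))
          * Fterm V θ L (y,k) (lam' (y,k)) * Fterm V θ L (y,k+1) (lam' (y,k+1))) := by
    rw [W_eq_prod V θ L lam' S hSl', ← Finset.prod_sdiff hTS, hprodT, hRR]
  -- the four one-step identities
  have hjR : (j:ℝ) ≠ 0 := Nat.cast_ne_zero.2 (by omega)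
  have hT1 : Fterm V θ L (x,j) (lam (x,j)) * ((j:ℝ) * ((lam (x,j) : ℕ) : ℝ))
      = Fterm V θ L (x,j) (lam' (x,j)) * (θ * (expNeg (V (scaledSite x L)))^j) := by
    rw [h1, Nat.cast_add, Nat.cast_one]
    calc Fterm V θ L (x,j) (lam' (x,j) + 1) * ((j:ℝ) * (((lam' (x,j) : ℕ):ℝ) + 1))
        = (Fterm V θ L (x,j) (lam' (x,j) + 1) * (((lam' (x,j) : ℕ):ℝ) + 1)) * (j:ℝ) := by ring
      _ = (Fterm V θ L (x,j) (lam' (x,j))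
            * ((θ/(j:ℝ)) * (expNeg (V (scaledSite x L)))^j)) * (j:ℝ) := by
          rw [Fterm_step]
      _ = Fterm V θ L (x,j) (lam' (x,j)) * (θ * (expNeg (V (scaledSite x L)))^j) := by
          field_simp
  have hT4 : Fterm V θ L (y,k+1) (lam' (y,k+1)) * (((k:ℝ)+1) * ((lam' (y,k+1) : ℕ) : ℝ))
      = Fterm V θ L (y,k+1) (lam (y,k+1)) * (θ * (expNeg (V (scaledSite y L)))^(k+1)) := by
    have hkR : ((k:ℝ)+1) ≠ 0 := by positivity
    rw [h4, Nat.cast_add, Nat.cast_one]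
    calc Fterm V θ L (y,k+1) (lam (y,k+1) + 1) * (((k:ℝ)+1) * (((lam (y,k+1) : ℕ):ℝ) + 1))
        = (Fterm V θ L (y,k+1) (lam (y,k+1) + 1) * (((lam (y,k+1) : ℕ):ℝ) + 1)) * ((k:ℝ)+1) := by
          ring
      _ = (Fterm V θ L (y,k+1) (lam (y,k+1))
            * ((θ/((k+1 : ℕ):ℝ)) * (expNeg (V (scaledSite y L)))^(k+1))) * ((k:ℝ)+1) := by
          rw [Fterm_step]
      _ = Fterm V θ L (y,k+1) (lam (y,k+1)) * (θ * (expNeg (V (scaledSite y L)))^(k+1)) := by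
          push_cast
          field_simp
  have hT3 : Fterm V θ L (y,k) (lam (y,k))
        * (if 1 ≤ k then (k:ℝ) * ((lam (y,k) : ℕ):ℝ) else θ)
      = Fterm V θ L (y,k) (lam' (y,k)) * (θ * (expNeg (V (scaledSite y L)))^k) := by
    rcases Nat.eq_zero_or_pos k with hk | hk
    · subst hk
      rw [if_neg (by omega), hz y, hz' y]
      simp
    · have hkR' : (k:ℝ) ≠ 0 := Nat.cast_ne_zero.2 (by omega)
      rw [if_pos (show 1 ≤ k from hk), h3 hk, Nat.cast_add, Nat.cast_one]
      calc Fterm V θ L (y,k) (lam' (y,k) + 1) * ((k:ℝ) * (((lam' (y,k) : ℕ):ℝ) + 1))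
          = (Fterm V θ L (y,k) (lam' (y,k) + 1) * (((lam' (y,k) : ℕ):ℝ) + 1)) * (k:ℝ) := by ring
        _ = (Fterm V θ L (y,k) (lam' (y,k))
              * ((θ/(k:ℝ)) * (expNeg (V (scaledSite y L)))^k)) * (k:ℝ) := by
            rw [Fterm_step]
        _ = Fterm V θ L (y,k) (lam' (y,k)) * (θ * (expNeg (V (scaledSite y L)))^k) := by
            field_simp
  have hT2 : Fterm V θ L (x,j-1) (lam' (x,j-1))
        * (if 1 ≤ j-1 then ((j-1 : ℕ):ℝ) * ((lam' (x,j-1) : ℕ):ℝ) else θ)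
      = Fterm V θ L (x,j-1) (lam (x,j-1)) * (θ * (expNeg (V (scaledSite x L)))^(j-1)) := by
    rcases Nat.lt_or_ge j 2 with hj2 | hj2
    · have hj1 : j - 1 = 0 := by omega
      rw [hj1, if_neg (by omega), hz x, hz' x]
      simp
    · have hjiR : ((j-1 : ℕ):ℝ) ≠ 0 := Nat.cast_ne_zero.2 (by omega)
      rw [if_pos (by omega : 1 ≤ j - 1), h2 hj2, Nat.cast_add, Nat.cast_one]
      calc Fterm V θ L (x,j-1) (lam (x,j-1) + 1)
            * (((j-1 : ℕ):ℝ) * (((lam (x,j-1) : ℕ):ℝ) + 1))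
          = (Fterm V θ L (x,j-1) (lam (x,j-1) + 1) * (((lam (x,j-1) : ℕ):ℝ) + 1))
              * ((j-1 : ℕ):ℝ) := by ring
        _ = (Fterm V θ L (x,j-1) (lam (x,j-1))
              * ((θ/((j-1 : ℕ):ℝ)) * (expNeg (V (scaledSite x L)))^(j-1))) * ((j-1 : ℕ):ℝ) := by
            rw [Fterm_step]
        _ = Fterm V θ L (x,j-1) (lam (x,j-1))
              * (θ * (expNeg (V (scaledSite x L)))^(j-1)) := by
            rw [mul_assoc, mul_comm ((θ/((j-1 : ℕ):ℝ)) * (expNeg (V (scaledSite x L)))^(j-1)),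
              ← mul_assoc, mul_assoc, ← mul_assoc ((j-1 : ℕ):ℝ), mul_div_cancel₀ _ hjiR]
  have hscal : (θ * (expNeg (V (scaledSite x L)))^j) * (θ * (expNeg (V (scaledSite y L)))^k)
        * t x y
      = (θ * (expNeg (V (scaledSite x L)))^(j-1)) * (θ * (expNeg (V (scaledSite y L)))^(k+1))
        * t y x := by
    have hb := htbal x y
    have hpow : (expNeg (V (scaledSite x L)))^j
        = (expNeg (V (scaledSite x L)))^(j-1) * expNeg (V (scaledSite x L)) := by
      rw [← pow_succ]
      congr 1
      omega
    rw [hpow, pow_succ]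
    linear_combination (θ * θ * (expNeg (V (scaledSite x L)))^(j-1)
      * (expNeg (V (scaledSite y L)))^k) * hb
  -- abbreviations
  set R : ℝ := ∏ p ∈ S \ T, Fterm V θ L p (lam p) with hRdef
  set F1 : ℝ := Fterm V θ L (x,j) (lam (x,j)) with hF1
  set F2 : ℝ := Fterm V θ L (x,j-1) (lam (x,j-1)) with hF2
  set F3 : ℝ := Fterm V θ L (y,k) (lam (y,k)) with hF3
  set F4 : ℝ := Fterm V θ L (y,k+1) (lam (y,k+1)) with hF4
  set F1' : ℝ := Fterm V θ L (x,j) (lam' (x,j)) with hF1'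
  set F2' : ℝ := Fterm V θ L (x,j-1) (lam' (x,j-1)) with hF2'
  set F3' : ℝ := Fterm V θ L (y,k) (lam' (y,k)) with hF3'
  set F4' : ℝ := Fterm V θ L (y,k+1) (lam' (y,k+1)) with hF4'
  set g1 : ℝ := θ * (expNeg (V (scaledSite x L)))^j with hg1
  set g2 : ℝ := θ * (expNeg (V (scaledSite x L)))^(j-1) with hg2
  set g3 : ℝ := θ * (expNeg (V (scaledSite y L)))^k with hg3
  set g4 : ℝ := θ * (expNeg (V (scaledSite y L)))^(k+1) with hg4
  -- the main unnormalized identity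
  have hMAIN : W V (fun _ => θ) L lam
        * ((j:ℝ) * ((lam (x,j) : ℕ):ℝ) * (if 1 ≤ k then (k:ℝ) * ((lam (y,k) : ℕ):ℝ) else θ))
        * t x y
      = W V (fun _ => θ) L lam'
        * (((k:ℝ)+1) * ((lam' (y,k+1) : ℕ):ℝ)
            * (if 1 ≤ j-1 then ((j-1 : ℕ):ℝ) * ((lam' (x,j-1) : ℕ):ℝ) else θ))
        * t y x := by
    rw [hWl, hWl']
    linear_combination
      (R * F2 * F4 * F3 * (if 1 ≤ k then (k:ℝ) * ((lam (y,k) : ℕ):ℝ) else θ) * t x y) * hT1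
      + (R * F2 * F4 * F1' * g1 * t x y) * hT3
      + (R * F2 * F4 * F1' * F3') * hscal
      - (R * F1' * F3' * F4 * g4 * t y x) * hT2
      - (R * F1' * F3' * F2' * (if 1 ≤ j-1 then ((j-1 : ℕ):ℝ) * ((lam' (x,j-1) : ℕ):ℝ) else θ)
          * t y x) * hT4
  -- rewriting the rates
  have hnx0 : siteOcc lam x ≠ 0 := by omega
  have hny0 : siteOcc lam' y ≠ 0 := by omega
  have hxR : ((siteOcc lam x : ℕ):ℝ) ≠ 0 := Nat.cast_ne_zero.2 hnx0
  have hyR : ((siteOcc lam' y : ℕ):ℝ) ≠ 0 := Nat.cast_ne_zero.2 hny0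
  have hDx : (0:ℝ) < θ + ((siteOcc lam x : ℕ):ℝ) - 1 := by
    have h1' : (1:ℝ) ≤ ((siteOcc lam x : ℕ):ℝ) := by exact_mod_cast hN3
    linarith
  have hDy : (0:ℝ) < ((siteOcc lam y : ℕ):ℝ) + θ := by positivity
  have hDy' : (0:ℝ) < θ + ((siteOcc lam' y : ℕ):ℝ) - 1 := by
    have h1' : (1:ℝ) ≤ ((siteOcc lam' y : ℕ):ℝ) := by exact_mod_cast hN4
    linarith
  have hDx' : (0:ℝ) < ((siteOcc lam' x : ℕ):ℝ) + θ := by positivity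
  have hrate1 := ccrRate_eq θ hθ t lam x y j k hN3
  have hrate2 : ccrRate θ t lam' y x (k+1) (j-1)
      = (((k:ℝ)+1) * ((lam' (y,k+1) : ℕ):ℝ)
            * (if 1 ≤ j-1 then ((j-1 : ℕ):ℝ) * ((lam' (x,j-1) : ℕ):ℝ) else θ) * t y x)
        / ((θ + ((siteOcc lam' y : ℕ):ℝ) - 1) * (((siteOcc lam' x : ℕ):ℝ) + θ)) := by
    rw [ccrRate_eq θ hθ t lam' y x (k+1) (j-1) hN4, Nat.cast_add, Nat.cast_one]
  have hcx : ((siteOcc lam x : ℕ):ℝ) = ((siteOcc lam' x : ℕ):ℝ) + 1 := by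
    exact_mod_cast congrArg (Nat.cast : ℕ → ℝ) hN1
  have hcy : ((siteOcc lam' y : ℕ):ℝ) = ((siteOcc lam y : ℕ):ℝ) + 1 := by
    exact_mod_cast congrArg (Nat.cast : ℕ → ℝ) hN2
  have hden : (θ + ((siteOcc lam' y : ℕ):ℝ) - 1) * (((siteOcc lam' x : ℕ):ℝ) + θ)
      = (θ + ((siteOcc lam x : ℕ):ℝ) - 1) * (((siteOcc lam y : ℕ):ℝ) + θ) := by
    rw [hcx, hcy]
    ring
  have hgoal1 : W V (fun _ => θ) L lam * ccrRate θ t lam x y j k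
      = W V (fun _ => θ) L lam' * ccrRate θ t lam' y x (k + 1) (j - 1) := by
    rw [hrate1, hrate2, hden, ← mul_div_assoc, ← mul_div_assoc]
    rw [show W V (fun _ => θ) L lam
        * ((j:ℝ) * ((lam (x,j) : ℕ):ℝ)
            * (if 1 ≤ k then (k:ℝ) * ((lam (y,k) : ℕ):ℝ) else θ) * t x y)
      = W V (fun _ => θ) L lam'
        * (((k:ℝ)+1) * ((lam' (y,k+1) : ℕ):ℝ)
            * (if 1 ≤ j-1 then ((j-1 : ℕ):ℝ) * ((lam' (x,j-1) : ℕ):ℝ) else θ) * t y x)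
      from by linear_combination hMAIN]
  refine ⟨hgoal1, ?_⟩
  rw [P_singleton V (fun _ => θ) L n lam hmass, P_singleton V (fun _ => θ) L n lam' hmass', div_mul_eq_mul_div, div_mul_eq_mul_div, hgoal1]

end Spart
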